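/- arXiv:1312.5474 — 4 statements merged into one kernel-verified Lean document; each statement's English description precedes it below -/
import Mathlib

section
/- A subgroup S of a group X is characteristic in X if and only if for every group Y containing X as a normal subgroup, S is a normal subgroup of Y. -/
/-- Conjugation by `y` as an automorphism of a normal subgroup. -/
def conjNormalEquiv {Y : Type*} [Group Y] (N : Subgroup Y) (hN : N.Normal) (y : Y) :
    N ≃* N where
  toFun n := ⟨y * n * y⁻¹, hN.conj_mem n n.2 y⟩
  invFun n := ⟨y⁻¹ * n * y, by simpa using hN.conj_mem n n.2 y⁻¹⟩
  left_inv n := by ext; simp; group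
  right_inv n := by ext; simp; group
  map_mul' a b := by ext; simp

theorem stmt6 {X : Type u} [Group X] (S : Subgroup X) :
    S.Characteristic ↔
      ∀ (Y : Type u) (_ : Group Y) (f : X →* Y),
        Function.Injective f → f.range.Normal → (S.map f).Normal := by
  constructor
  · intro hS Y _ f hf hN
    constructor
    intro g hg y
    obtain ⟨s, hs, rfl⟩ := hg
    set e : X ≃* f.range := MonoidHom.ofInjective hf with he
    set φ : X ≃* X := e.trans ((conjNormalEquiv f.range hN y).trans e.symm) with hφ
    have hφs : φ s ∈ S := by
      rw [Subgroup.characteristic_iff_map_eq] at hS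
      rw [← hS φ]
      exact ⟨s, hs, rfl⟩
    refine ⟨φ s, hφs, ?_⟩
    have key : (e (φ s) : Y) = y * f s * y⁻¹ := by
      rw [hφ]
      simp only [MulEquiv.trans_apply, MulEquiv.apply_symm_apply]
      rfl
    exact key
  · intro h
    rw [Subgroup.characteristic_iff_map_le]
    intro φ
    have hn := h (X ⋊[MonoidHom.id (MulAut X)] MulAut X) inferInstance
      SemidirectProduct.inl SemidirectProduct.inl_injective
      (by rw [SemidirectProduct.range_inl_eq_ker_rightHom]; infer_instance)
    intro x hx
    obtain ⟨s, hs, rfl⟩ := hx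
    have key : SemidirectProduct.inl (φ s) ∈ S.map (SemidirectProduct.inl :
        X →* X ⋊[MonoidHom.id (MulAut X)] MulAut X) := by
      have h2 := SemidirectProduct.inl_aut (φ := MonoidHom.id (MulAut X)) φ s
      rw [MonoidHom.id_apply] at h2
      rw [h2, map_inv]
      exact hn.conj_mem _ ⟨s, hs, rfl⟩ _
    obtain ⟨t, ht, hts⟩ := key
    exact (SemidirectProduct.inl_injective hts) ▸ ht
end

section
/- Let A be the free abelian group on generators x, y, z, equipped with the unique ℤ-bilinear multiplication ∗ determined by x∗x = x, x∗y = y∗x = 0, x∗z = z∗x = y, y∗y = 0, y∗z = z∗y = x, z∗z = z (a non-associative ring). Let K be the additive subgroup generated by x and y. Then K is an ideal of A (closed under multiplication by arbitrary elements on both sides), but the additive subgroup [K,K] generated by products of pairs of elements of K, which equals the subgroup generated by x, is not an ideal of A: indeed x∗z = y ∉ ⟨x⟩. -/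
/-- The free abelian group on three generators `x, y, z`, realized as `Fin 3 → ℤ`. -/
abbrev NA11 : Type := Fin 3 → ℤ

/-- The generator `x`. -/
def x11 : NA11 := ![1, 0, 0]
/-- The generator `y`. -/
def y11 : NA11 := ![0, 1, 0]
/-- The generator `z`. -/
def z11 : NA11 := ![0, 0, 1]

/-- The unique ℤ-bilinear multiplication with `x∗x = x`, `x∗y = y∗x = 0`,
`x∗z = z∗x = y`, `y∗y = 0`, `y∗z = z∗y = x`, `z∗z = z`. -/
def mul11 (a b : NA11) : NA11 :=
  ![a 0 * b 0 + a 1 * b 2 + a 2 * b 1, a 0 * b 2 + a 2 * b 0, a 2 * b 2]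

lemma memxy (v : NA11) : v ∈ AddSubgroup.closure {x11, y11} ↔ v 2 = 0 := by
  constructor
  · intro h
    induction h using AddSubgroup.closure_induction with
    | mem w hw => rcases hw with h | h <;> subst h <;> rfl
    | zero => rfl
    | add a b _ _ ha hb => show a 2 + b 2 = 0; rw [ha, hb]; ring
    | neg a _ ha => show -(a 2) = 0; rw [ha]; ring
  · intro h
    have : v = v 0 • x11 + v 1 • y11 := by
      funext i
      fin_cases i <;> simp [x11, y11, h, Pi.smul_apply, smul_eq_mul]
    rw [this]
    exact add_mem (AddSubgroup.zsmul_mem _ (AddSubgroup.subset_closure (by left; rfl)) _)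
      (AddSubgroup.zsmul_mem _ (AddSubgroup.subset_closure (by right; rfl)) _)

lemma memx (v : NA11) : v ∈ AddSubgroup.closure ({x11} : Set NA11) ↔ v 1 = 0 ∧ v 2 = 0 := by
  constructor
  · intro h
    induction h using AddSubgroup.closure_induction with
    | mem w hw => subst hw; exact ⟨rfl, rfl⟩
    | zero => exact ⟨rfl, rfl⟩
    | add a b _ _ ha hb =>
        exact ⟨show a 1 + b 1 = 0 by rw [ha.1, hb.1]; ring,
               show a 2 + b 2 = 0 by rw [ha.2, hb.2]; ring⟩
    | neg a _ ha =>
        exact ⟨show -(a 1) = 0 by rw [ha.1]; ring, show -(a 2) = 0 by rw [ha.2]; ring⟩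
  · intro ⟨h1, h2⟩
    have : v = v 0 • x11 := by
      funext i; fin_cases i <;>
        simp [x11, h1, h2, Pi.smul_apply, smul_eq_mul]
    exact AddSubgroup.mem_closure_singleton.2 ⟨v 0, this.symm⟩

theorem stmt11 :
    -- the multiplication is biadditive (distributive on both sides)
    (∀ a b c : NA11, mul11 (a + b) c = mul11 a c + mul11 b c) ∧
    (∀ a b c : NA11, mul11 a (b + c) = mul11 a b + mul11 a c) ∧
    -- it realizes the prescribed multiplication table
    mul11 x11 x11 = x11 ∧ mul11 x11 y11 = 0 ∧ mul11 y11 x11 = 0 ∧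
    mul11 x11 z11 = y11 ∧ mul11 z11 x11 = y11 ∧ mul11 y11 y11 = 0 ∧
    mul11 y11 z11 = x11 ∧ mul11 z11 y11 = x11 ∧ mul11 z11 z11 = z11 ∧
    -- K = ⟨x, y⟩ is an ideal of A
    (∀ a k : NA11, k ∈ AddSubgroup.closure {x11, y11} →
      mul11 a k ∈ AddSubgroup.closure {x11, y11} ∧
      mul11 k a ∈ AddSubgroup.closure {x11, y11}) ∧
    -- the Higgins commutator [K,K] is the subgroup generated by x
    AddSubgroup.closure {p : NA11 | ∃ k₁ ∈ AddSubgroup.closure {x11, y11},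
        ∃ k₂ ∈ AddSubgroup.closure {x11, y11}, p = mul11 k₁ k₂}
      = AddSubgroup.closure {x11} ∧
    -- and [K,K] is not an ideal: x ∗ z = y ∉ ⟨x⟩
    mul11 x11 z11 = y11 ∧ y11 ∉ AddSubgroup.closure {x11} := by
  have hxz : mul11 x11 z11 = y11 := by
    funext i; fin_cases i <;> simp [mul11, x11, y11, z11]
  refine ⟨?_, ?_, ?_, ?_, ?_, hxz, ?_, ?_, ?_, ?_, ?_, ?_, ?_, hxz, ?_⟩
  · intro a b c; funext i; fin_cases i <;>
      simp [mul11, Pi.add_apply] <;> ring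
  · intro a b c; funext i; fin_cases i <;>
      simp [mul11, Pi.add_apply] <;> ring
  · funext i; fin_cases i <;> simp [mul11, x11]
  · funext i; fin_cases i <;> simp [mul11, x11, y11]
  · funext i; fin_cases i <;> simp [mul11, x11, y11]
  · funext i; fin_cases i <;> simp [mul11, x11, y11, z11]
  · funext i; fin_cases i <;> simp [mul11, y11]
  · funext i; fin_cases i <;> simp [mul11, x11, y11, z11]
  · funext i; fin_cases i <;> simp [mul11, x11, y11, z11]
  · funext i; fin_cases i <;> simp [mul11, z11]
  · intro a k hk
    have h2 : k 2 = 0 := (memxy k).1 hk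
    constructor
    · exact (memxy _).2 (show a 2 * k 2 = 0 by rw [h2]; ring)
    · exact (memxy _).2 (show k 2 * a 2 = 0 by rw [h2]; ring)
  · apply le_antisymm
    · rw [AddSubgroup.closure_le]
      rintro p ⟨k₁, h1, k₂, h2, rfl⟩
      have e1 : k₁ 2 = 0 := (memxy k₁).1 h1
      have e2 : k₂ 2 = 0 := (memxy k₂).1 h2
      exact (memx _).2 ⟨show k₁ 0 * k₂ 2 + k₁ 2 * k₂ 0 = 0 by rw [e1, e2]; ring,
        show k₁ 2 * k₂ 2 = 0 by rw [e1]; ring⟩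
    · rw [AddSubgroup.closure_le]
      rintro p rfl
      refine AddSubgroup.subset_closure
        ⟨x11, (memxy x11).2 rfl, x11, (memxy x11).2 rfl, ?_⟩
      funext i; fin_cases i <;> simp [mul11, x11]
  · intro h
    have := ((memx y11).1 h).1
    simp [y11] at this
end

section
/- Consider the abelian group ℤ with the symmetric ternary operation t(x,y,z) = xyz, which is distributive in each variable and satisfies t(t(x,y,z),u,v) = t(t(x,u,v),y,z). Then the subgroups 2ℤ and 4ℤ are ideals (t(k,x₁,x₂) ∈ K whenever k ∈ K), the binary Higgins commutator — the subgroup generated by all t(k₁,k₂,l) and t(k,l₁,l₂) with kᵢ ∈ 2ℤ, lⱼ ∈ 4ℤ — equals 16ℤ, while the ternary commutator — the subgroup generated by t(k,l,x) with k ∈ 2ℤ, l ∈ 4ℤ, x ∈ ℤ — equals 8ℤ. -/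
lemma mem_zmul_iff (a n : ℤ) : n ∈ AddSubgroup.zmultiples a ↔ ∃ m : ℤ, n = a * m := by
  constructor
  · rintro ⟨m, rfl⟩; exact ⟨m, by simp [mul_comm]⟩
  · rintro ⟨m, rfl⟩; exact ⟨m, by simp [mul_comm]⟩

theorem stmt12 :
    -- 2ℤ and 4ℤ are ideals for t(x,y,z) = x*y*z
    (∀ k ∈ AddSubgroup.zmultiples (2 : ℤ), ∀ x₁ x₂ : ℤ,
      k * x₁ * x₂ ∈ AddSubgroup.zmultiples (2 : ℤ)) ∧
    (∀ k ∈ AddSubgroup.zmultiples (4 : ℤ), ∀ x₁ x₂ : ℤ,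
      k * x₁ * x₂ ∈ AddSubgroup.zmultiples (4 : ℤ)) ∧
    -- the binary Higgins commutator [2ℤ, 4ℤ] equals 16ℤ
    AddSubgroup.closure {n : ℤ |
        (∃ k₁ ∈ AddSubgroup.zmultiples (2 : ℤ), ∃ k₂ ∈ AddSubgroup.zmultiples (2 : ℤ),
          ∃ l ∈ AddSubgroup.zmultiples (4 : ℤ), n = k₁ * k₂ * l) ∨
        (∃ k ∈ AddSubgroup.zmultiples (2 : ℤ), ∃ l₁ ∈ AddSubgroup.zmultiples (4 : ℤ),
          ∃ l₂ ∈ AddSubgroup.zmultiples (4 : ℤ), n = k * l₁ * l₂)}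
      = AddSubgroup.zmultiples (16 : ℤ) ∧
    -- the ternary commutator [2ℤ, 4ℤ, ℤ] equals 8ℤ
    AddSubgroup.closure {n : ℤ |
        ∃ k ∈ AddSubgroup.zmultiples (2 : ℤ), ∃ l ∈ AddSubgroup.zmultiples (4 : ℤ),
          ∃ x : ℤ, n = k * l * x}
      = AddSubgroup.zmultiples (8 : ℤ) := by
  refine ⟨?_, ?_, ?_, ?_⟩
  · intro k hk x₁ x₂
    rw [mem_zmul_iff] at hk ⊢
    obtain ⟨m, rfl⟩ := hk
    exact ⟨m * x₁ * x₂, by ring⟩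
  · intro k hk x₁ x₂
    rw [mem_zmul_iff] at hk ⊢
    obtain ⟨m, rfl⟩ := hk
    exact ⟨m * x₁ * x₂, by ring⟩
  · apply le_antisymm
    · rw [AddSubgroup.closure_le]
      rintro n (⟨k₁, hk₁, k₂, hk₂, l, hl, rfl⟩ | ⟨k, hk, l₁, hl₁, l₂, hl₂, rfl⟩)
      · rw [mem_zmul_iff] at hk₁ hk₂ hl
        obtain ⟨a, rfl⟩ := hk₁; obtain ⟨b, rfl⟩ := hk₂; obtain ⟨c, rfl⟩ := hl
        exact (mem_zmul_iff _ _).2 ⟨a * b * c, by ring⟩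
      · rw [mem_zmul_iff] at hk hl₁ hl₂
        obtain ⟨a, rfl⟩ := hk; obtain ⟨b, rfl⟩ := hl₁; obtain ⟨c, rfl⟩ := hl₂
        exact (mem_zmul_iff _ _).2 ⟨2 * (a * b * c), by ring⟩
    · rw [AddSubgroup.zmultiples_le]
      apply AddSubgroup.subset_closure
      exact Or.inl ⟨2, (mem_zmul_iff _ _).2 ⟨1, by ring⟩, 2, (mem_zmul_iff _ _).2 ⟨1, by ring⟩,
        4, (mem_zmul_iff _ _).2 ⟨1, by ring⟩, by ring⟩
  · apply le_antisymm
    · rw [AddSubgroup.closure_le]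
      rintro n ⟨k, hk, l, hl, x, rfl⟩
      rw [mem_zmul_iff] at hk hl
      obtain ⟨a, rfl⟩ := hk; obtain ⟨b, rfl⟩ := hl
      exact (mem_zmul_iff _ _).2 ⟨a * b * x, by ring⟩
    · rw [AddSubgroup.zmultiples_le]
      apply AddSubgroup.subset_closure
      exact ⟨2, (mem_zmul_iff _ _).2 ⟨1, by ring⟩, 4, (mem_zmul_iff _ _).2 ⟨1, by ring⟩,
        1, by ring⟩
end

section
/- In an abelian group equipped with a symmetric trilinear ternary operation t satisfying t(t(x,y,z),u,v) = t(t(x,u,v),y,z), if K and L are ideals of X (i.e., t(k,x₁,x₂) ∈ K and t(l,x₁,x₂) ∈ L for all x₁,x₂ ∈ X), then the subgroup [K,L] generated by all elements t(k₁,k₂,l) and t(k,l₁,l₂) (kᵢ ∈ K, lⱼ ∈ L) is again an ideal of X. -/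
theorem stmt13 {X : Type*} [AddCommGroup X] (t : X → X → X → X)
    -- t is symmetric
    (hsymm₁ : ∀ a b c : X, t a b c = t b a c)
    (hsymm₂ : ∀ a b c : X, t a b c = t a c b)
    -- t is additive in each variable
    (hadd₁ : ∀ a a' b c : X, t (a + a') b c = t a b c + t a' b c)
    (hadd₂ : ∀ a b b' c : X, t a (b + b') c = t a b c + t a b' c)
    (hadd₃ : ∀ a b c c' : X, t a b (c + c') = t a b c + t a b c')
    -- the associativity law
    (hassoc : ∀ a b c u v : X, t (t a b c) u v = t (t a u v) b c)
    (K L : AddSubgroup X)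
    -- K and L are ideals
    (hK : ∀ k ∈ K, ∀ x₁ x₂ : X, t k x₁ x₂ ∈ K)
    (hL : ∀ l ∈ L, ∀ x₁ x₂ : X, t l x₁ x₂ ∈ L) :
    -- the commutator [K,L] is again an ideal
    ∀ w ∈ AddSubgroup.closure {p : X |
        (∃ k₁ ∈ K, ∃ k₂ ∈ K, ∃ l ∈ L, p = t k₁ k₂ l) ∨
        (∃ k ∈ K, ∃ l₁ ∈ L, ∃ l₂ ∈ L, p = t k l₁ l₂)},
      ∀ x₁ x₂ : X, t w x₁ x₂ ∈ AddSubgroup.closure {p : X |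
        (∃ k₁ ∈ K, ∃ k₂ ∈ K, ∃ l ∈ L, p = t k₁ k₂ l) ∨
        (∃ k ∈ K, ∃ l₁ ∈ L, ∃ l₂ ∈ L, p = t k l₁ l₂)} := by
  have hzero : ∀ b c : X, t 0 b c = 0 := by
    intro b c
    have := hadd₁ 0 0 b c
    simp at this
    exact this
  have hneg : ∀ a b c : X, t (-a) b c = -(t a b c) := by
    intro a b c
    have := hadd₁ a (-a) b c
    simp [hzero] at this
    exact (neg_eq_of_add_eq_zero_right this.symm).symm
  intro w hw x₁ x₂
  induction hw using AddSubgroup.closure_induction with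
  | mem p hp =>
      apply AddSubgroup.subset_closure
      rcases hp with ⟨k₁, hk₁, k₂, hk₂, l, hl, rfl⟩ | ⟨k, hk, l₁, hl₁, l₂, hl₂, rfl⟩
      · left
        exact ⟨t k₁ x₁ x₂, hK k₁ hk₁ x₁ x₂, k₂, hk₂, l, hl, hassoc k₁ k₂ l x₁ x₂⟩
      · right
        exact ⟨t k x₁ x₂, hK k hk x₁ x₂, l₁, hl₁, l₂, hl₂, hassoc k l₁ l₂ x₁ x₂⟩
  | zero => simpa [hzero] using (AddSubgroup.closure _).zero_mem
  | add a b _ _ ha hb => rw [hadd₁]; exact AddSubgroup.add_mem _ ha hb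
  | neg a _ ha => rw [hneg]; exact AddSubgroup.neg_mem _ ha
end
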